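/- If H is the K_1-corona of a finite simple graph G with vertex set {X_1,...,X_d}, then the closed neighborhood ideal of H in K[X_1,...,X_d,Y_1,...,Y_d] equals the ideal generated by the monomials X_1Y_1, X_2Y_2, ..., X_dY_d. -/

import Mathlib

open scoped Classical in
/-- The closed neighborhood ideal of a finite simple graph `G`, generated in
`K[X_v : v ∈ V]` by the products of the variables in the closed neighborhoods of the
vertices. -/
noncomputable def nbhdIdeal {V : Type*} [Fintype V] (K : Type*) [Field K]
    (G : SimpleGraph V) : Ideal (MvPolynomial V K) :=
  Ideal.span { m | ∃ i : V,
    m = ∏ j ∈ (insert i {j | G.Adj i j} : Set V).toFinset, MvPolynomial.X j }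

/-- The `K₁`-corona of `G`: add to `G` a pendant vertex (whisker) attached to each
vertex of `G`.  The original vertices are `Sum.inl i` and the whisker vertices are
`Sum.inr i`. -/
def corona {V : Type*} (G : SimpleGraph V) : SimpleGraph (V ⊕ V) where
  Adj a b :=
    (∃ i j, a = Sum.inl i ∧ b = Sum.inl j ∧ G.Adj i j) ∨
    (∃ i, a = Sum.inl i ∧ b = Sum.inr i) ∨
    (∃ i, a = Sum.inr i ∧ b = Sum.inl i)
  symm := by
    constructor
    rintro a b (⟨i, j, rfl, rfl, h⟩ | ⟨i, rfl, rfl⟩ | ⟨i, rfl, rfl⟩)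
    · exact Or.inl ⟨j, i, rfl, rfl, h.symm⟩
    · exact Or.inr (Or.inr ⟨i, rfl, rfl⟩)
    · exact Or.inr (Or.inl ⟨i, rfl, rfl⟩)
  loopless := by
    constructor
    rintro a (⟨i, j, rfl, h1, h⟩ | ⟨i, rfl, h1⟩ | ⟨i, rfl, h1⟩)
    · obtain rfl := Sum.inl_injective h1
      exact G.loopless.irrefl i h
    · exact Sum.inl_ne_inr h1
    · exact Sum.inr_ne_inl h1

lemma corona_prod_inr {d : ℕ} (K : Type*) [Field K] (G : SimpleGraph (Fin d)) (i : Fin d)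
    {inst : Fintype (insert (Sum.inr i) {j | (corona G).Adj (Sum.inr i) j} : Set (Fin d ⊕ Fin d))} :
    (∏ j ∈ (insert (Sum.inr i) {j | (corona G).Adj (Sum.inr i) j} :
        Set (Fin d ⊕ Fin d)).toFinset, MvPolynomial.X j : MvPolynomial (Fin d ⊕ Fin d) K) =
      MvPolynomial.X (Sum.inl i) * MvPolynomial.X (Sum.inr i) := by
  classical
  have hfin : (insert (Sum.inr i) {j | (corona G).Adj (Sum.inr i) j} :
      Set (Fin d ⊕ Fin d)).toFinset = {Sum.inr i, Sum.inl i} := by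
    ext a
    simp only [Set.mem_toFinset, Set.mem_insert_iff, Set.mem_setOf_eq, Finset.mem_insert,
      Finset.mem_singleton]
    constructor
    · rintro (rfl | h)
      · exact Or.inl rfl
      · rcases h with ⟨_, _, h, _, _⟩ | ⟨_, h, _⟩ | ⟨j, hj, rfl⟩
        · exact absurd h (Sum.inr_ne_inl ·)
        · exact absurd h (Sum.inr_ne_inl ·)
        · obtain rfl := Sum.inr_injective hj
          exact Or.inr rfl
    · rintro (rfl | rfl)
      · exact Or.inl rfl
      · exact Or.inr (Or.inr (Or.inr ⟨i, rfl, rfl⟩))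
  rw [hfin, Finset.prod_pair (by simp)]
  ring

lemma corona_dvd_inl {d : ℕ} (K : Type*) [Field K] (G : SimpleGraph (Fin d)) (i : Fin d)
    {inst : Fintype (insert (Sum.inl i) {j | (corona G).Adj (Sum.inl i) j} : Set (Fin d ⊕ Fin d))} :
    (MvPolynomial.X (Sum.inl i) * MvPolynomial.X (Sum.inr i) :
        MvPolynomial (Fin d ⊕ Fin d) K) ∣
      ∏ j ∈ (insert (Sum.inl i) {j | (corona G).Adj (Sum.inl i) j} :
        Set (Fin d ⊕ Fin d)).toFinset, MvPolynomial.X j := by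
  have hsub : ({Sum.inl i, Sum.inr i} : Finset (Fin d ⊕ Fin d)) ⊆
      (insert (Sum.inl i) {j | (corona G).Adj (Sum.inl i) j} :
        Set (Fin d ⊕ Fin d)).toFinset := by
    intro a ha
    rcases Finset.mem_insert.mp ha with rfl | ha
    · simp
    · rw [Finset.mem_singleton.mp ha]
      simp only [Set.mem_toFinset, Set.mem_insert_iff, Set.mem_setOf_eq]
      exact Or.inr (Or.inr (Or.inl ⟨i, rfl, rfl⟩))
  have := Finset.prod_dvd_prod_of_subset _ _
    (fun j => (MvPolynomial.X j : MvPolynomial (Fin d ⊕ Fin d) K)) hsub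
  rwa [Finset.prod_pair (by simp)] at this

/-- The closed neighborhood ideal of the `K₁`-corona `H` of a graph `G` on `d` vertices
is generated by the `d` monomials `XᵢYᵢ`. -/
theorem stmt6 (d : ℕ) (K : Type*) [Field K] (G : SimpleGraph (Fin d)) :
    nbhdIdeal K (corona G) =
      Ideal.span { m : MvPolynomial (Fin d ⊕ Fin d) K | ∃ i : Fin d,
        m = MvPolynomial.X (Sum.inl i) * MvPolynomial.X (Sum.inr i) } := by
  apply le_antisymm
  · rw [nbhdIdeal, Ideal.span_le]
    rintro m ⟨v, rfl⟩
    cases v with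
    | inl i =>
        obtain ⟨c, hc⟩ := corona_dvd_inl K G i
        rw [hc]
        exact Ideal.mul_mem_right c _ (Ideal.subset_span ⟨i, rfl⟩)
    | inr i =>
        rw [corona_prod_inr K G i]
        exact Ideal.subset_span ⟨i, rfl⟩
  · rw [Ideal.span_le]
    rintro m ⟨i, rfl⟩
    rw [← corona_prod_inr K G i]
    exact Ideal.subset_span ⟨Sum.inr i, rfl⟩
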